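/- Let f : ℝ^d → ℝ be twice continuously differentiable with a ρ-Lipschitz Hessian, let x ∈ ℝ^d, θ > 0, σ̃ ≥ 0, and let e₁, …, e_d be the standard basis of ℝ^d. Let g⁰, g₁, …, g_d ∈ ℝ^d satisfy ‖g⁰ − ∇f(x)‖ ≤ σ̃ and ‖g_i − ∇f(x + θe_i)‖ ≤ σ̃ for all i, and let H be the d×d matrix whose i-th column is (g_i − g⁰)/θ. Then for every h ∈ ℝ^d: |⟨h, Hh⟩ − ⟨h, ∇²f(x)·h⟩| ≤ √d·‖h‖²·(2σ̃/θ + ρθ/2). -/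

import Mathlib

open scoped RealInnerProductSpace

open Set in
/-- Taylor bound for a function with Lipschitz derivative. -/
lemma taylor_grad_aux {E : Type*} [NormedAddCommGroup E] [NormedSpace ℝ E]
    {G : E → E} {ρ : ℝ} (hG : Differentiable ℝ G)
    (hlip : ∀ x y : E, ‖fderiv ℝ G x - fderiv ℝ G y‖ ≤ ρ * ‖x - y‖)
    (x v : E) :
    ‖G (x + v) - G x - fderiv ℝ G x v‖ ≤ ρ / 2 * ‖v‖ ^ 2 := by
  set A := fderiv ℝ G x with hA
  set φ : ℝ → E := fun t => G (x + t • v) - t • A v - G x with hφ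
  set φ' : ℝ → E := fun t => fderiv ℝ G (x + t • v) v - A v with hφ'
  have hd : ∀ t : ℝ, HasDerivAt φ (φ' t) t := by
    intro t
    have line : HasDerivAt (fun t : ℝ => x + t • v) v t := by
      simpa using ((hasDerivAt_id t).smul_const v).const_add x
    have h1 : HasDerivAt (fun t : ℝ => G (x + t • v)) (fderiv ℝ G (x + t • v) v) t :=
      (hG (x + t • v)).hasFDerivAt.comp_hasDerivAt t line
    have h2 : HasDerivAt (fun t : ℝ => t • A v) (A v) t := by
      simpa using (hasDerivAt_id t).smul_const (A v)
    simpa [φ, φ'] using (h1.sub h2).sub_const (G x)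
  have key : ∀ t ∈ Icc (0:ℝ) 1, ‖φ t‖ ≤ ρ * ‖v‖ ^ 2 * (t ^ 2 / 2) := by
    have hB : ∀ t : ℝ, HasDerivAt (fun t : ℝ => ρ * ‖v‖ ^ 2 * (t ^ 2 / 2))
        (ρ * ‖v‖ ^ 2 * t) t := by
      intro t
      have := ((hasDerivAt_pow 2 t).div_const 2).const_mul (ρ * ‖v‖ ^ 2)
      simpa [mul_comm, mul_assoc, mul_div_assoc] using this
    refine image_norm_le_of_norm_deriv_right_le_deriv_boundary
      (f := φ) (f' := φ') (a := 0) (b := 1)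
      (fun t _ => (hd t).continuousAt.continuousWithinAt)
      (fun t _ => (hd t).hasDerivWithinAt) ?_ hB ?_
    · simp [φ]
    · intro t ht
      have h0 : (0:ℝ) ≤ t := ht.1
      have : ‖φ' t‖ = ‖(fderiv ℝ G (x + t • v) - A) v‖ := by
        simp [φ', ContinuousLinearMap.sub_apply]
      rw [this]
      calc ‖(fderiv ℝ G (x + t • v) - A) v‖
          ≤ ‖fderiv ℝ G (x + t • v) - A‖ * ‖v‖ :=
            ContinuousLinearMap.le_opNorm _ _
        _ ≤ ρ * ‖x + t • v - x‖ * ‖v‖ :=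
            mul_le_mul_of_nonneg_right (hlip (x + t • v) x) (norm_nonneg v)
        _ = ρ * ‖v‖ ^ 2 * t := by
            have : ‖x + t • v - x‖ = t * ‖v‖ := by
              simp [norm_smul, abs_of_nonneg h0]
            rw [this]; ring
  have := key 1 (by norm_num)
  have hφ1 : φ 1 = G (x + v) - G x - A v := by simp [φ]; abel
  rw [hφ1] at this
  calc ‖G (x + v) - G x - A v‖ ≤ ρ * ‖v‖ ^ 2 * (1 ^ 2 / 2) := this
    _ = ρ / 2 * ‖v‖ ^ 2 := by ring

/-- Quadratic-form error of the finite-difference Hessian estimate. If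
`‖g⁰ − ∇f(x)‖ ≤ σ̃`, `‖gᵢ − ∇f(x + θeᵢ)‖ ≤ σ̃`, and `H` has `i`-th column
`(gᵢ − g⁰)/θ`, then `|⟨h, Hh⟩ − ⟨h, ∇²f(x)h⟩| ≤ √d ‖h‖² (2σ̃/θ + ρθ/2)`. -/
theorem stmt15 (d : ℕ) (ρ θ σt : ℝ) (hθ : 0 < θ) (hσt : 0 ≤ σt)
    (f : EuclideanSpace ℝ (Fin d) → ℝ) (hf : ContDiff ℝ 2 f)
    (hlip : ∀ x y : EuclideanSpace ℝ (Fin d),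
      ‖fderiv ℝ (gradient f) x - fderiv ℝ (gradient f) y‖ ≤ ρ * ‖x - y‖)
    (x : EuclideanSpace ℝ (Fin d))
    (g0 : EuclideanSpace ℝ (Fin d)) (g : Fin d → EuclideanSpace ℝ (Fin d))
    (hg0 : ‖g0 - gradient f x‖ ≤ σt)
    (hg : ∀ i : Fin d, ‖g i - gradient f (x + θ • EuclideanSpace.single i 1)‖ ≤ σt)
    (H : Matrix (Fin d) (Fin d) ℝ)
    (hH : ∀ i j : Fin d, H j i = (g i j - g0 j) / θ) :
    ∀ h : EuclideanSpace ℝ (Fin d),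
      |⟪h, (WithLp.toLp 2 (H.mulVec h) : EuclideanSpace ℝ (Fin d))⟫ -
          ⟪h, fderiv ℝ (gradient f) x h⟫| ≤
        Real.sqrt d * ‖h‖ ^ 2 * (2 * σt / θ + ρ * θ / 2) := by
  intro h
  set G := gradient f with hG
  set A := fderiv ℝ G x with hA
  rcases Nat.eq_zero_or_pos d with hd | hd
  · subst hd
    have hh : h = 0 := Subsingleton.elim h 0
    simp [hh]
  -- ρ ≥ 0
  have hρ : 0 ≤ ρ := by
    have h1 := hlip x (x + EuclideanSpace.single ⟨0, hd⟩ (1:ℝ))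
    have h2 : ‖x - (x + EuclideanSpace.single ⟨0, hd⟩ (1:ℝ))‖ = 1 := by
      rw [show x - (x + EuclideanSpace.single (⟨0, hd⟩ : Fin d) (1:ℝ))
          = -(EuclideanSpace.single (⟨0, hd⟩ : Fin d) (1:ℝ)) by abel]
      rw [norm_neg, EuclideanSpace.norm_single, norm_one]
    rw [h2, mul_one] at h1
    exact le_trans (norm_nonneg _) h1
  -- differentiability of the gradient
  have hGc : ContDiff ℝ 1 G := by
    have h1 : ContDiff ℝ 1 (fderiv ℝ f) := hf.fderiv_right (by norm_num)
    exact ((InnerProductSpace.toDual ℝ (EuclideanSpace ℝ (Fin d))).symm.contDiff).comp h1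
  have hGd : Differentiable ℝ G := hGc.differentiable one_ne_zero
  set e : Fin d → EuclideanSpace ℝ (Fin d) := fun i => EuclideanSpace.single i (1:ℝ) with he
  set c : Fin d → EuclideanSpace ℝ (Fin d) := fun i => θ⁻¹ • (g i - g0) with hc
  set ε : ℝ := 2 * σt / θ + ρ * θ / 2 with hε
  -- per-column bound
  have col : ∀ i, ‖c i - A (e i)‖ ≤ ε := by
    intro i
    have hne : ‖e i‖ = 1 := by rw [he]; rw [EuclideanSpace.norm_single, norm_one]
    have htay : ‖G (x + θ • e i) - G x - A (θ • e i)‖ ≤ ρ / 2 * θ ^ 2 := by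
      have := taylor_grad_aux hGd hlip x (θ • e i)
      calc ‖G (x + θ • e i) - G x - A (θ • e i)‖ ≤ ρ / 2 * ‖θ • e i‖ ^ 2 := this
        _ = ρ / 2 * θ ^ 2 := by
            rw [norm_smul, hne]; rw [Real.norm_eq_abs, abs_of_pos hθ]; ring
    have hdecomp : c i - A (e i)
        = θ⁻¹ • ((g i - G (x + θ • e i)) - (g0 - G x)
            + (G (x + θ • e i) - G x - A (θ • e i))) := by
      have hmap : A (θ • e i) = θ • A (e i) := A.map_smul θ (e i)
      have hci : c i = θ⁻¹ • (g i - g0) := rfl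
      rw [hci, hmap]
      simp only [smul_add, smul_sub]
      rw [inv_smul_smul₀ (ne_of_gt hθ)]
      abel
    rw [hdecomp, norm_smul, Real.norm_eq_abs, abs_of_pos (inv_pos.mpr hθ)]
    calc θ⁻¹ * ‖(g i - G (x + θ • e i)) - (g0 - G x)
            + (G (x + θ • e i) - G x - A (θ • e i))‖
        ≤ θ⁻¹ * (σt + σt + ρ / 2 * θ ^ 2) := by
          refine mul_le_mul_of_nonneg_left ?_ (le_of_lt (inv_pos.mpr hθ))
          calc ‖(g i - G (x + θ • e i)) - (g0 - G x)
                + (G (x + θ • e i) - G x - A (θ • e i))‖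
              ≤ ‖(g i - G (x + θ • e i)) - (g0 - G x)‖
                + ‖G (x + θ • e i) - G x - A (θ • e i)‖ := norm_add_le _ _
            _ ≤ (‖g i - G (x + θ • e i)‖ + ‖g0 - G x‖)
                + ‖G (x + θ • e i) - G x - A (θ • e i)‖ := by
                  gcongr; exact norm_sub_le _ _
            _ ≤ σt + σt + ρ / 2 * θ ^ 2 :=
                  add_le_add (add_le_add (hg i) hg0) htay
      _ = ε := by rw [hε]; field_simp; ring
  -- decompositions of the two quadratic forms
  have hsum : ∑ i, h i • e i = h := by
    have := (EuclideanSpace.basisFun (Fin d) ℝ).sum_repr h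
    simpa [he, EuclideanSpace.basisFun_apply, EuclideanSpace.basisFun_repr] using this
  have hHsum : (WithLp.toLp 2 (H.mulVec h) : EuclideanSpace ℝ (Fin d)) = ∑ i, h i • c i := by
    ext j
    have : (∑ i, h i • c i) j = ∑ i, h i * c i j := by
      induction (Finset.univ : Finset (Fin d)) using Finset.induction with
      | empty => simp
      | insert _ _ hij ih => simp [Finset.sum_insert hij, ih]
    rw [this]
    simp only [Matrix.mulVec, dotProduct]
    refine Finset.sum_congr rfl fun i _ => ?_
    rw [hH i j]
    simp [hc, div_eq_inv_mul]
    ring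
  have hinnerH : ⟪h, (WithLp.toLp 2 (H.mulVec h) : EuclideanSpace ℝ (Fin d))⟫ = ∑ i, h i * ⟪h, c i⟫ := by
    rw [hHsum, inner_sum]
    exact Finset.sum_congr rfl fun i _ => real_inner_smul_right _ _ _
  have hinnerA : ⟪h, A h⟫ = ∑ i, h i * ⟪h, A (e i)⟫ := by
    have hAh : A h = ∑ i, h i • A (e i) := by
      conv_lhs => rw [← hsum]
      rw [map_sum]
      exact Finset.sum_congr rfl fun i _ => A.map_smul _ _
    rw [hAh, inner_sum]
    exact Finset.sum_congr rfl fun i _ => real_inner_smul_right _ _ _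
  rw [hinnerH, hinnerA, ← Finset.sum_sub_distrib]
  have hterm : ∀ i, h i * ⟪h, c i⟫ - h i * ⟪h, A (e i)⟫ = h i * ⟪h, c i - A (e i)⟫ := by
    intro i
    rw [inner_sub_right]; ring
  rw [Finset.sum_congr rfl fun i _ => hterm i]
  have hε0 : 0 ≤ ε := by
    rw [hε]
    have h1 : 0 ≤ 2 * σt / θ := div_nonneg (by linarith) hθ.le
    have h2 : 0 ≤ ρ * θ / 2 := div_nonneg (mul_nonneg hρ hθ.le) (by norm_num)
    linarith
  calc |∑ i, h i * ⟪h, c i - A (e i)⟫|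
      ≤ ∑ i, |h i * ⟪h, c i - A (e i)⟫| := Finset.abs_sum_le_sum_abs _ _
    _ ≤ ∑ i, |h i| * (‖h‖ * ε) := by
        refine Finset.sum_le_sum fun i _ => ?_
        rw [abs_mul]
        gcongr
        calc |⟪h, c i - A (e i)⟫| ≤ ‖h‖ * ‖c i - A (e i)‖ := abs_real_inner_le_norm _ _
          _ ≤ ‖h‖ * ε := by gcongr; exact col i
    _ = (∑ i, |h i|) * (‖h‖ * ε) := by rw [← Finset.sum_mul]
    _ ≤ (Real.sqrt d * ‖h‖) * (‖h‖ * ε) := by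
        refine mul_le_mul_of_nonneg_right ?_ (mul_nonneg (norm_nonneg h) hε0)
        -- Cauchy-Schwarz: ∑ |h i| ≤ √d ‖h‖
        have h1 : (∑ i, |h i|) ^ 2 ≤ (d : ℝ) * ∑ i, |h i| ^ 2 := by
            simpa using sq_sum_le_card_mul_sum_sq (s := Finset.univ) (f := fun i => |h i|)
        have h2 : ∑ i, |h i| ^ 2 = ‖h‖ ^ 2 := by
          rw [EuclideanSpace.norm_eq, Real.sq_sqrt (by positivity)]
          exact Finset.sum_congr rfl fun i _ => by rw [Real.norm_eq_abs]
        have h3 : (∑ i, |h i|) ^ 2 ≤ (Real.sqrt d * ‖h‖) ^ 2 := by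
          rw [mul_pow, Real.sq_sqrt (Nat.cast_nonneg d)]
          rw [h2] at h1; exact h1
        have h4 : (0:ℝ) ≤ ∑ i, |h i| := Finset.sum_nonneg fun i _ => abs_nonneg _
        have h5 := Real.sqrt_le_sqrt h3
        rwa [Real.sqrt_sq h4, Real.sqrt_sq (by positivity)] at h5
    _ = Real.sqrt d * ‖h‖ ^ 2 * ε := by ring
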